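/- arXiv:1405.3913 — 3 statements merged into one kernel-verified Lean document; each statement's English description precedes it below -/
import Mathlib

section
/- Let X be a random variable in the class 𝒟 and let X^L be a random variable with distribution function equal to the Lorenz curve of X. If h : (0,1) → ℝ is a function such that h·Q is integrable on (0,1), where Q is the quantile function of X, then E[h(X^L)] = (1/E[X]) ∫₀¹ h(u) Q(u) du = (1/E[X]) E[h(F(X)) X], where F is the distribution function of X. -/
open MeasureTheory Set Filter

noncomputable section

variable {Ω : Type*} [MeasurableSpace Ω]

/-- Cumulative distribution function of the random variable `X` under `ℙ`. -/
def distFun (ℙ : Measure Ω) (X : Ω → ℝ) (x : ℝ) : ℝ :=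
  (ℙ {ω | X ω ≤ x}).toReal

/-- Survival (complementary distribution) function of `X` under `ℙ`. -/
def survFun (ℙ : Measure Ω) (X : Ω → ℝ) (x : ℝ) : ℝ :=
  (ℙ {ω | x < X ω}).toReal

/-- Quantile function `Q(u) = inf {x : ℝ | F(x) ≥ u}`. -/
def quantileFun (ℙ : Measure Ω) (X : Ω → ℝ) (u : ℝ) : ℝ :=
  sInf {x : ℝ | u ≤ distFun ℙ X x}

/-- Quantile density function `q(u) = Q'(u)`. -/
def quantileDens (ℙ : Measure Ω) (X : Ω → ℝ) : ℝ → ℝ :=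
  deriv (quantileFun ℙ X)

/-- The class `𝒟` of absolutely continuous random variables with finite mean whose
quantile function vanishes at `0+` and is differentiable on `(0,1)`.  (As noted in
the paper, such random variables are nonnegative with finite nonzero mean.) -/
structure MemD (ℙ : Measure Ω) (X : Ω → ℝ) : Prop where
  meas : Measurable X
  absCont : ℙ.map X ≪ (volume : Measure ℝ)
  integrable : Integrable X ℙ
  quantile_zero : Tendsto (quantileFun ℙ X) (nhdsWithin 0 (Ioi 0)) (nhds 0)
  diff : ∀ u ∈ Ioo (0:ℝ) 1, DifferentiableAt ℝ (quantileFun ℙ X) u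
  nonneg : ∀ᵐ ω ∂ℙ, 0 ≤ X ω
  mean_pos : 0 < ∫ ω, X ω ∂ℙ

/-- The Lorenz curve `L(p) = (1/E[X]) ∫₀ᵖ Q(u) du` of `X`. -/
def lorenz (ℙ : Measure Ω) (X : Ω → ℝ) (p : ℝ) : ℝ :=
  (∫ ω, X ω ∂ℙ)⁻¹ * ∫ u in (0:ℝ)..p, quantileFun ℙ X u

/-- `Z` takes values in `(0,1)` and has probability density `f` there. -/
def HasDensityOn01 (ℙ : Measure Ω) (Z : Ω → ℝ) (f : ℝ → ℝ) : Prop :=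
  (∀ ω, Z ω ∈ Ioo (0:ℝ) 1) ∧
    ∀ t ∈ Icc (0:ℝ) 1, distFun ℙ Z t = ∫ u in (0:ℝ)..t, f u

/-- Conditional value-at-risk `CVaR[X;p] = (1/(1-p)) ∫_p¹ (Q(t) - Q(p)) dt`. -/
def cvar (ℙ : Measure Ω) (X : Ω → ℝ) (p : ℝ) : ℝ :=
  (1 - p)⁻¹ * ∫ t in p..(1:ℝ), (quantileFun ℙ X t - quantileFun ℙ X p)

/-- Average value-at-risk `AVaR[X;v] = (1/v) ∫₀ᵛ Q(u) du`. -/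
def avar (ℙ : Measure Ω) (X : Ω → ℝ) (v : ℝ) : ℝ :=
  v⁻¹ * ∫ u in (0:ℝ)..v, quantileFun ℙ X u

/-- Generalized binomial coefficient `C(α,k) = α(α-1)⋯(α-k+1)/k!`. -/
def genBinom (α : ℝ) (k : ℕ) : ℝ :=
  (∏ i ∈ Finset.range k, (α - (i : ℝ))) / (Nat.factorial k : ℝ)

open scoped ENNReal NNReal

open ProbabilityTheory (cdf monotone_cdf tendsto_cdf_atBot tendsto_cdf_atTop ofReal_cdf cdf_le_one cdf_nonneg measure_cdf cdf_eq_real)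

lemma aux_cdf_continuous (μ : Measure ℝ) [IsProbabilityMeasure μ] (hac : μ ≪ volume) :
    Continuous (cdf μ) := by
  rw [continuous_iff_continuousAt]
  intro x
  rw [(monotone_cdf μ).continuousAt_iff_leftLim_eq_rightLim, (cdf μ).rightLim_eq]
  have h0 : μ {x} = 0 := hac (measure_singleton x)
  have hm := (cdf μ).measure_singleton x
  rw [measure_cdf, h0] at hm
  have hle : Function.leftLim (⇑(cdf μ)) x ≤ cdf μ x := (monotone_cdf μ).leftLim_le le_rfl
  have := ENNReal.ofReal_eq_zero.1 hm.symm
  linarith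

lemma aux_measure_Ioc (μ : Measure ℝ) [IsProbabilityMeasure μ] (a b : ℝ) :
    μ (Ioc a b) = ENNReal.ofReal (cdf μ b - cdf μ a) := by
  conv_lhs => rw [← measure_cdf μ]
  exact (cdf μ).measure_Ioc a b

lemma aux_flat_null (μ : Measure ℝ) [IsProbabilityMeasure μ] (hc : Continuous (cdf μ)) (q : ℝ) :
    ∃ N, MeasurableSet N ∧ {x | q < x ∧ cdf μ x ≤ cdf μ q} ⊆ N ∧ μ N = 0 := by
  set S := {x | q < x ∧ cdf μ x ≤ cdf μ q} with hS
  have key : ∀ x ∈ S, μ (Ioc q x) = 0 := by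
    intro x hx
    rw [aux_measure_Ioc, ENNReal.ofReal_eq_zero]
    linarith [hx.2]
  rcases eq_empty_or_nonempty S with h | h
  · exact ⟨∅, .empty, by simp [h], measure_empty⟩
  by_cases hb : BddAbove S
  · refine ⟨Ioc q (sSup S), measurableSet_Ioc, fun x hx => ⟨hx.1, le_csSup hb hx⟩, ?_⟩
    apply key
    obtain ⟨x0, hx0⟩ := id h
    constructor
    · exact lt_of_lt_of_le hx0.1 (le_csSup hb hx0)
    · by_contra hlt
      push_neg at hlt
      have hopen : IsOpen {y | cdf μ q < cdf μ y} := isOpen_lt continuous_const hc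
      obtain ⟨ε, hε, hball⟩ := Metric.isOpen_iff.1 hopen _ hlt
      obtain ⟨x, hxS, hxgt⟩ := exists_lt_of_lt_csSup h (by linarith : sSup S - ε < sSup S)
      have hxle : x ≤ sSup S := le_csSup hb hxS
      have : x ∈ Metric.ball (sSup S) ε := by
        rw [Metric.mem_ball, Real.dist_eq, abs_lt]; constructor <;> linarith
      exact absurd (hball this) (not_lt.2 hxS.2)
  · refine ⟨Ioi q, measurableSet_Ioi, fun x hx => hx.1, ?_⟩
    have hcover : Ioi q ⊆ ⋃ n : ℕ, Ioc q (q + n + 1) := by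
      intro y hy
      obtain ⟨n, hn⟩ := exists_nat_ge (y - q)
      exact mem_iUnion.2 ⟨n, hy, by linarith⟩
    refine measure_mono_null hcover (measure_iUnion_null fun n => ?_)
    rw [not_bddAbove_iff] at hb
    obtain ⟨x, hxS, hxgt⟩ := hb (q + n + 1)
    exact measure_mono_null (Ioc_subset_Ioc_right hxgt.le) (key x hxS)


lemma aux_zero_null (μ : Measure ℝ) [IsProbabilityMeasure μ] (hc : Continuous (cdf μ)) :
    ∃ N, MeasurableSet N ∧ {x | cdf μ x ≤ 0} ⊆ N ∧ μ N = 0 := by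
  set T := {x | cdf μ x ≤ 0} with hT
  have key : ∀ x ∈ T, μ (Iic x) = 0 := by
    intro x hx
    rw [← ofReal_cdf μ x, ENNReal.ofReal_eq_zero]
    exact hx
  rcases eq_empty_or_nonempty T with h | h
  · exact ⟨∅, .empty, by simp [h], measure_empty⟩
  by_cases hb : BddAbove T
  · refine ⟨Iic (sSup T), measurableSet_Iic, fun x hx => le_csSup hb hx, ?_⟩
    apply key
    by_contra hlt
    rw [hT, mem_setOf_eq, not_le] at hlt
    have hopen : IsOpen {y | 0 < cdf μ y} := isOpen_lt continuous_const hc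
    obtain ⟨ε, hε, hball⟩ := Metric.isOpen_iff.1 hopen _ hlt
    obtain ⟨x, hxT, hxgt⟩ := exists_lt_of_lt_csSup h (by linarith : sSup T - ε < sSup T)
    have hxle : x ≤ sSup T := le_csSup hb hxT
    have : x ∈ Metric.ball (sSup T) ε := by
      rw [Metric.mem_ball, Real.dist_eq, abs_lt]; constructor <;> linarith
    have hcon : 0 < cdf μ x := hball this
    have hxT' : cdf μ x ≤ 0 := hxT
    linarith
  · exfalso
    have huniv : (univ : Set ℝ) ⊆ ⋃ n : ℕ, Iic (n : ℝ) := by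
      intro y _
      obtain ⟨n, hn⟩ := exists_nat_ge y
      exact mem_iUnion.2 ⟨n, hn⟩
    have : μ univ = 0 := by
      refine measure_mono_null huniv (measure_iUnion_null fun n => ?_)
      rw [not_bddAbove_iff] at hb
      obtain ⟨x, hxT, hxgt⟩ := hb n
      exact measure_mono_null (Iic_subset_Iic.2 hxgt.le) (key x hxT)
    simp [measure_univ] at this

lemma aux_one_null (μ : Measure ℝ) [IsProbabilityMeasure μ] (hc : Continuous (cdf μ))
    (hac : μ ≪ volume) :
    ∃ N, MeasurableSet N ∧ {x | 1 ≤ cdf μ x} ⊆ N ∧ μ N = 0 := by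
  set T := {x | 1 ≤ cdf μ x} with hT
  have key : ∀ x ∈ T, μ (Ioi x) = 0 := by
    intro x hx
    have h1 : μ (Iic x) = 1 := by
      rw [← ofReal_cdf μ x]
      have hle : cdf μ x ≤ 1 := cdf_le_one μ x
      have : cdf μ x = 1 := le_antisymm hle hx
      rw [this, ENNReal.ofReal_one]
    have := measure_compl (measurableSet_Iic (a := x)) (measure_ne_top μ _)
    rw [compl_Iic, h1, measure_univ] at this
    simp at this
    exact this
  rcases eq_empty_or_nonempty T with h | h
  · exact ⟨∅, .empty, by simp [h], measure_empty⟩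
  by_cases hb : BddBelow T
  · refine ⟨Ici (sInf T), measurableSet_Ici, fun x hx => csInf_le hb hx, ?_⟩
    have hsT : sInf T ∈ T := by
      by_contra hlt
      rw [hT, mem_setOf_eq, not_le] at hlt
      have hopen : IsOpen {y | cdf μ y < 1} := isOpen_lt hc continuous_const
      obtain ⟨ε, hε, hball⟩ := Metric.isOpen_iff.1 hopen _ hlt
      obtain ⟨x, hxT, hxlt⟩ := exists_lt_of_csInf_lt h (by linarith : sInf T < sInf T + ε)
      have hxge : sInf T ≤ x := csInf_le hb hxT
      have : x ∈ Metric.ball (sInf T) ε := by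
        rw [Metric.mem_ball, Real.dist_eq, abs_lt]; constructor <;> linarith
      have hcon : cdf μ x < 1 := hball this
      have hxT' : (1:ℝ) ≤ cdf μ x := hxT
      linarith
    have : Ici (sInf T) = {sInf T} ∪ Ioi (sInf T) := by
      ext y; simp [mem_Ici, le_iff_lt_or_eq, or_comm, eq_comm]
    rw [this]
    refine measure_union_null (hac (measure_singleton _)) (key _ hsT)
  · exfalso
    have huniv : (univ : Set ℝ) ⊆ ⋃ n : ℕ, Ioi (-(n : ℝ)) := by
      intro y _
      obtain ⟨n, hn⟩ := exists_nat_gt (-y)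
      exact mem_iUnion.2 ⟨n, by simpa [mem_Ioi] using neg_lt.1 hn⟩
    have : μ univ = 0 := by
      refine measure_mono_null huniv (measure_iUnion_null fun n => ?_)
      rw [not_bddBelow_iff] at hb
      obtain ⟨x, hxT, hxlt⟩ := hb (-(n:ℝ))
      exact measure_mono_null (Ioi_subset_Ioi hxlt.le) (key x hxT)
    simp [measure_univ] at this


lemma aux_qs_nonempty (μ : Measure ℝ) [IsProbabilityMeasure μ] {u : ℝ} (hu : u < 1) :
    {x : ℝ | u ≤ cdf μ x}.Nonempty := by
  have := (tendsto_cdf_atTop μ).eventually (eventually_gt_nhds hu)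
  obtain ⟨x, hx⟩ := this.exists
  exact ⟨x, hx.le⟩

lemma aux_qs_bddBelow (μ : Measure ℝ) [IsProbabilityMeasure μ] {u : ℝ} (hu : 0 < u) :
    BddBelow {x : ℝ | u ≤ cdf μ x} := by
  have := (tendsto_cdf_atBot μ).eventually (eventually_lt_nhds hu)
  obtain ⟨z, hz⟩ := this.exists
  refine ⟨z, fun x hx => ?_⟩
  by_contra hlt
  push_neg at hlt
  exact absurd (le_trans hx (monotone_cdf μ hlt.le)) (not_le.2 hz)

lemma aux_qf_le (μ : Measure ℝ) [IsProbabilityMeasure μ] {u x : ℝ} (hu : 0 < u)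
    (hx : u ≤ cdf μ x) : sInf {x : ℝ | u ≤ cdf μ x} ≤ x :=
  csInf_le (aux_qs_bddBelow μ hu) hx

lemma aux_le_cdf_qf (μ : Measure ℝ) [IsProbabilityMeasure μ] (hc : Continuous (cdf μ))
    {u : ℝ} (hu : 0 < u) (hu1 : u < 1) :
    u ≤ cdf μ (sInf {x : ℝ | u ≤ cdf μ x}) := by
  set m := sInf {x : ℝ | u ≤ cdf μ x} with hm
  by_contra hlt
  push_neg at hlt
  have hopen : IsOpen {y | cdf μ y < u} := isOpen_lt hc continuous_const
  obtain ⟨ε, hε, hball⟩ := Metric.isOpen_iff.1 hopen _ hlt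
  have : m + ε / 2 ≤ m := by
    rw [hm]
    refine le_csInf (aux_qs_nonempty μ hu1) (fun x hx => ?_)
    by_contra hxlt
    push_neg at hxlt
    have hxm : m ≤ x := aux_qf_le μ hu hx
    have : x ∈ Metric.ball m ε := by
      rw [Metric.mem_ball, Real.dist_eq, abs_lt]; constructor <;> linarith
    have := hball this
    rw [mem_setOf_eq] at this
    rw [mem_setOf_eq] at hx
    linarith
  linarith

lemma aux_qf_mono (μ : Measure ℝ) [IsProbabilityMeasure μ] {u v : ℝ} (hu : 0 < u)
    (hv : v < 1) (huv : u ≤ v) :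
    sInf {x : ℝ | u ≤ cdf μ x} ≤ sInf {x : ℝ | v ≤ cdf μ x} :=
  csInf_le_csInf (aux_qs_bddBelow μ hu) (aux_qs_nonempty μ hv)
    (fun x hx => le_trans huv hx)

lemma aux_qf_cdf_ae (μ : Measure ℝ) [IsProbabilityMeasure μ] (hc : Continuous (cdf μ))
    (hac : μ ≪ volume) :
    ∃ N, MeasurableSet N ∧ μ N = 0 ∧
      ∀ x ∉ N, sInf {y : ℝ | cdf μ x ≤ cdf μ y} = x := by
  obtain ⟨N0, hN0m, hN0s, hN0⟩ := aux_zero_null μ hc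
  obtain ⟨N1, hN1m, hN1s, hN1⟩ := aux_one_null μ hc hac
  choose Nq hNqm hNqs hNq using fun q : ℚ => aux_flat_null μ hc (q : ℝ)
  refine ⟨N0 ∪ N1 ∪ ⋃ q : ℚ, Nq q,
    ((hN0m.union hN1m).union (MeasurableSet.iUnion hNqm)), ?_, ?_⟩
  · refine measure_union_null (measure_union_null hN0 hN1) (measure_iUnion_null hNq)
  · intro x hx
    simp only [mem_union, mem_iUnion, not_or, not_exists] at hx
    obtain ⟨⟨hx0, hx1⟩, hxq⟩ := hx
    have hFpos : 0 < cdf μ x := by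
      by_contra hle; push_neg at hle; exact hx0 (hN0s hle)
    have hFlt1 : cdf μ x < 1 := by
      by_contra hge; push_neg at hge; exact hx1 (hN1s hge)
    set m := sInf {y : ℝ | cdf μ x ≤ cdf μ y} with hm
    have hmle : m ≤ x := aux_qf_le μ hFpos le_rfl
    rcases lt_or_eq_of_le hmle with hmlt | heq
    · exfalso
      have hFm : cdf μ x ≤ cdf μ m := aux_le_cdf_qf μ hc hFpos hFlt1
      obtain ⟨q, hq1, hq2⟩ := exists_rat_btwn hmlt
      refine hxq q (hNqs q ⟨hq2, ?_⟩)
      calc cdf μ x ≤ cdf μ m := hFm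
        _ ≤ cdf μ q := monotone_cdf μ hq1.le
    · exact heq
lemma aux_uniform {Ω : Type*} [MeasurableSpace Ω] (ℙ : Measure Ω) [IsProbabilityMeasure ℙ]
    (X : Ω → ℝ) (hX : Measurable X) (hc : Continuous (cdf (ℙ.map X)))
    (hac : ℙ.map X ≪ volume) :
    ℙ.map (fun ω => cdf (ℙ.map X) (X ω)) = volume.restrict (Ioo 0 1) := by
  set μ := ℙ.map X with hμ
  haveI : IsProbabilityMeasure μ := Measure.isProbabilityMeasure_map hX.aemeasurable
  have hFm : Measurable (cdf μ) := (monotone_cdf μ).measurable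
  haveI : IsProbabilityMeasure (ℙ.map (fun ω => cdf μ (X ω))) :=
    Measure.isProbabilityMeasure_map (hFm.comp hX).aemeasurable
  refine Measure.ext_of_Iic _ _ (fun u => ?_)
  rw [show (fun ω => cdf μ (X ω)) = (cdf μ) ∘ X from rfl,
    Measure.map_apply (hFm.comp hX) measurableSet_Iic,
    Measure.restrict_apply measurableSet_Iic]
  rw [show ((cdf μ) ∘ X) ⁻¹' (Iic u) = {ω | cdf μ (X ω) ≤ u} from rfl]
  rcases le_or_gt u 0 with hu | hu
  · have hrhs : Iic u ∩ Ioo (0:ℝ) 1 = ∅ := by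
      ext y; simp only [mem_inter_iff, mem_Iic, mem_Ioo, mem_empty_iff_false, iff_false]
      rintro ⟨h1, h2, _⟩; linarith
    rw [hrhs, measure_empty]
    obtain ⟨N0, hN0m, hN0s, hN0⟩ := aux_zero_null μ hc
    have hXN0 : ℙ (X ⁻¹' N0) = 0 := by
      rw [← Measure.map_apply hX hN0m]; exact hN0
    exact measure_mono_null (fun ω hω => hN0s (le_trans hω hu)) hXN0
  rcases lt_or_ge u 1 with hu1 | hu1
  · -- 0 < u < 1
    have hrhs : Iic u ∩ Ioo (0:ℝ) 1 = Ioc 0 u := by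
      ext y
      simp only [mem_inter_iff, mem_Iic, mem_Ioo, mem_Ioc]
      constructor
      · rintro ⟨h1, h2, _⟩; exact ⟨h2, h1⟩
      · rintro ⟨h1, h2⟩; exact ⟨h2, h1, lt_of_le_of_lt h2 hu1⟩
    rw [hrhs, Real.volume_Ioc, sub_zero]
    -- find a with cdf μ a = u
    obtain ⟨z1, hz1⟩ := ((tendsto_cdf_atBot μ).eventually (eventually_lt_nhds hu)).exists
    obtain ⟨z2, hz2⟩ := ((tendsto_cdf_atTop μ).eventually (eventually_gt_nhds hu1)).exists
    obtain ⟨a, ha⟩ := intermediate_value_univ z1 z2 hc ⟨hz1.le, hz2.le⟩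
    obtain ⟨Na, hNam, hNas, hNa⟩ := aux_flat_null μ hc a
    have hAB : X ⁻¹' (Iic a) ⊆ {ω | cdf μ (X ω) ≤ u} := by
      intro ω hω
      rw [mem_setOf_eq, ← ha]
      exact monotone_cdf μ hω
    have hBA : {ω | cdf μ (X ω) ≤ u} ⊆ X ⁻¹' (Iic a) ∪ X ⁻¹' Na := by
      intro ω hω
      rcases le_or_gt (X ω) a with h | h
      · exact Or.inl h
      · exact Or.inr (hNas ⟨h, by rw [ha]; exact hω⟩)
    have hNa' : ℙ (X ⁻¹' Na) = 0 := by rw [← Measure.map_apply hX hNam]; exact hNa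
    have hIic : ℙ (X ⁻¹' (Iic a)) = ENNReal.ofReal u := by
      rw [← Measure.map_apply hX measurableSet_Iic, ← hμ, ← ofReal_cdf μ a, ha]
    refine le_antisymm ?_ ?_
    · calc ℙ {ω | cdf μ (X ω) ≤ u} ≤ ℙ (X ⁻¹' (Iic a) ∪ X ⁻¹' Na) := measure_mono hBA
        _ ≤ ℙ (X ⁻¹' (Iic a)) + ℙ (X ⁻¹' Na) := measure_union_le _ _
        _ = ENNReal.ofReal u := by rw [hNa', hIic, add_zero]
    · rw [← hIic]; exact measure_mono hAB
  · -- 1 ≤ u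
    have hrhs : Iic u ∩ Ioo (0:ℝ) 1 = Ioo 0 1 := by
      apply inter_eq_self_of_subset_right
      intro y hy; exact le_trans hy.2.le hu1
    have hlhs : {ω | cdf μ (X ω) ≤ u} = univ :=
      eq_univ_of_forall (fun ω => le_trans (cdf_le_one μ _) hu1)
    rw [hrhs, hlhs, measure_univ, Real.volume_Ioo]
    norm_num


/-- Proposition 2.1.  For `X ∈ 𝒟` and `X^L` with distribution function the
Lorenz curve of `X`, and `h` with `h·Q` integrable on `(0,1)`,
`E[h(X^L)] = (1/E[X]) ∫₀¹ h(u) Q(u) du = (1/E[X]) E[h(F(X)) X]`. -/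
theorem stmt0 (ℙ : Measure Ω) [IsProbabilityMeasure ℙ] (X XL : Ω → ℝ)
    (hX : MemD ℙ X) (hXLmeas : Measurable XL)
    (hXLval : ∀ ω, XL ω ∈ Ioo (0:ℝ) 1)
    (hXLcdf : ∀ p ∈ Icc (0:ℝ) 1, distFun ℙ XL p = lorenz ℙ X p)
    (h : ℝ → ℝ)
    (hInt : IntegrableOn (fun u => h u * quantileFun ℙ X u) (Ioo 0 1) volume) :
    ∫ ω, h (XL ω) ∂ℙ
        = (∫ ω, X ω ∂ℙ)⁻¹ * ∫ u in Ioo (0:ℝ) 1, h u * quantileFun ℙ X u ∧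
    ∫ ω, h (XL ω) ∂ℙ
        = (∫ ω, X ω ∂ℙ)⁻¹ * ∫ ω, h (distFun ℙ X (X ω)) * X ω ∂ℙ := by
  haveI hPM : IsProbabilityMeasure (ℙ.map X) := Measure.isProbabilityMeasure_map hX.meas.aemeasurable
  set μ := ℙ.map X with hμ
  set Q := quantileFun ℙ X with hQdef
  have hdist : ∀ x, distFun ℙ X x = cdf μ x := by
    intro x
    rw [cdf_eq_real, measureReal_def, hμ, Measure.map_apply hX.meas measurableSet_Iic]
    rfl
  have hqf : ∀ u, Q u = sInf {x : ℝ | u ≤ cdf μ x} := by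
    intro u
    rw [hQdef, quantileFun]
    congr 1
    ext x
    rw [mem_setOf_eq, mem_setOf_eq, hdist]
  have hc : Continuous (cdf μ) := aux_cdf_continuous μ hX.absCont
  have hE : (0:ℝ) < ∫ ω, X ω ∂ℙ := hX.mean_pos
  have hEne : (∫ ω, X ω ∂ℙ) ≠ 0 := ne_of_gt hE
  -- basic properties of Q on (0,1)
  have hQnonneg : ∀ u ∈ Ioo (0:ℝ) 1, 0 ≤ Q u := by
    intro u hu
    refine le_of_tendsto hX.quantile_zero ?_
    filter_upwards [Ioo_mem_nhdsGT_of_mem (left_mem_Ico.2 hu.1)] with v hv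
    have hm := aux_qf_mono μ hv.1 hu.2 hv.2.le
    rw [← hqf, ← hqf] at hm
    exact hm
  have hQcont : ContinuousOn Q (Ioo 0 1) :=
    fun u hu => ((hX.diff u hu).continuousAt).continuousWithinAt
  have hQae : AEMeasurable Q (volume.restrict (Ioo 0 1)) :=
    hQcont.aemeasurable measurableSet_Ioo
  -- the total mass identity
  have hXL1 : distFun ℙ XL 1 = 1 := by
    rw [distFun]
    have : {ω | XL ω ≤ 1} = univ := eq_univ_of_forall (fun ω => (hXLval ω).2.le)
    rw [this, measure_univ, ENNReal.toReal_one]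
  have hlor : (∫ ω, X ω ∂ℙ)⁻¹ * ∫ u in (0:ℝ)..1, Q u = 1 := by
    have h1 := hXLcdf 1 ⟨zero_le_one, le_rfl⟩
    rw [hXL1, lorenz, ← hQdef] at h1
    exact h1.symm
  have hint01 : (∫ u in (0:ℝ)..1, Q u) = ∫ u in Ioc (0:ℝ) 1, Q u :=
    intervalIntegral.integral_of_le zero_le_one
  have hQint : IntegrableOn Q (Ioc 0 1) volume := by
    by_contra hni
    rw [hint01, integral_undef hni, mul_zero] at hlor
    exact zero_ne_one hlor
  have hQval : ∫ u in Ioc (0:ℝ) 1, Q u = ∫ ω, X ω ∂ℙ := by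
    rw [hint01] at hlor
    field_simp at hlor
    linarith
  -- the candidate law of XL
  set d : ℝ → ℝ≥0∞ := fun u => ENNReal.ofReal ((∫ ω, X ω ∂ℙ)⁻¹ * Q u) with hd
  set ν : Measure ℝ := (volume.restrict (Ioo 0 1)).withDensity d with hν
  have hmapXL : ℙ.map XL = ν := by
    haveI : IsProbabilityMeasure (ℙ.map XL) := Measure.isProbabilityMeasure_map hXLmeas.aemeasurable
    refine Measure.ext_of_Iic _ _ (fun p => ?_)
    rw [Measure.map_apply hXLmeas measurableSet_Iic, hν, withDensity_apply _ measurableSet_Iic,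
      Measure.restrict_restrict measurableSet_Iic]
    rcases le_or_gt p 0 with hp | hp
    · have h1 : XL ⁻¹' (Iic p) = ∅ := by
        ext ω
        simp only [mem_preimage, mem_Iic, mem_empty_iff_false, iff_false, not_le]
        exact lt_of_le_of_lt hp (hXLval ω).1
      have h2 : Iic p ∩ Ioo (0:ℝ) 1 = ∅ := by
        ext y
        simp only [mem_inter_iff, mem_Iic, mem_Ioo, mem_empty_iff_false, iff_false]
        rintro ⟨hy1, hy2, _⟩; linarith
      rw [h1, h2]
      simp
    rcases lt_or_ge p 1 with hp1 | hp1
    · have h2 : Iic p ∩ Ioo (0:ℝ) 1 = Ioc 0 p := by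
        ext y
        simp only [mem_inter_iff, mem_Iic, mem_Ioo, mem_Ioc]
        constructor
        · rintro ⟨h1, h2, _⟩; exact ⟨h2, h1⟩
        · rintro ⟨h1, h2⟩; exact ⟨h2, h1, lt_of_le_of_lt h2 hp1⟩
      rw [h2]
      have hℙ : ℙ (XL ⁻¹' Iic p) = ENNReal.ofReal (distFun ℙ XL p) := by
        rw [distFun, ENNReal.ofReal_toReal (measure_ne_top ℙ _)]
        rfl
      rw [hℙ, hXLcdf p ⟨hp.le, hp1.le⟩, lorenz]
      have hIcp : IntegrableOn (fun u => (∫ ω, X ω ∂ℙ)⁻¹ * Q u) (Ioc 0 p) volume :=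
        (hQint.mono_set (Ioc_subset_Ioc_right hp1.le)).const_mul _
      have hnonneg : 0 ≤ᵐ[volume.restrict (Ioc (0:ℝ) p)] fun u => (∫ ω, X ω ∂ℙ)⁻¹ * Q u := by
        filter_upwards [ae_restrict_mem measurableSet_Ioc] with u hu
        exact mul_nonneg (inv_nonneg.2 hE.le) (hQnonneg u ⟨hu.1, lt_of_le_of_lt hu.2 hp1⟩)
      rw [← ofReal_integral_eq_lintegral_ofReal hIcp hnonneg]
      congr 1
      rw [intervalIntegral.integral_of_le hp.le, MeasureTheory.integral_const_mul]
    · have h1 : XL ⁻¹' (Iic p) = univ :=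
        eq_univ_of_forall fun ω => le_trans (hXLval ω).2.le hp1
      have h2 : Iic p ∩ Ioo (0:ℝ) 1 = Ioo 0 1 :=
        inter_eq_self_of_subset_right (fun y hy => le_trans hy.2.le hp1)
      rw [h1, h2, measure_univ]
      have hIoo : IntegrableOn (fun u => (∫ ω, X ω ∂ℙ)⁻¹ * Q u) (Ioo 0 1) volume :=
        (hQint.mono_set Ioo_subset_Ioc_self).const_mul _
      have hnonneg : 0 ≤ᵐ[volume.restrict (Ioo (0:ℝ) 1)] fun u => (∫ ω, X ω ∂ℙ)⁻¹ * Q u := by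
        filter_upwards [ae_restrict_mem measurableSet_Ioo] with u hu
        exact mul_nonneg (inv_nonneg.2 hE.le) (hQnonneg u hu)
      rw [← ofReal_integral_eq_lintegral_ofReal hIoo hnonneg, MeasureTheory.integral_const_mul]
      rw [← MeasureTheory.integral_Ioc_eq_integral_Ioo, hQval,
        inv_mul_cancel₀ hEne, ENNReal.ofReal_one]
  -- a.e. strong measurability of h w.r.t. ν
  have hhQm : AEStronglyMeasurable (fun u => h u * Q u) (volume.restrict (Ioo 0 1)) :=
    hInt.aestronglyMeasurable
  have hνac : ν ≪ volume.restrict (Ioo 0 1) := hν ▸ withDensity_absolutelyContinuous _ _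
  have hg : AEStronglyMeasurable (fun u => (h u * Q u) * (Q u)⁻¹) (volume.restrict (Ioo 0 1)) :=
    hhQm.mul (hQae.inv).aestronglyMeasurable
  have hgν : AEStronglyMeasurable (fun u => (h u * Q u) * (Q u)⁻¹) ν := hg.mono_ac hνac
  have hdae : AEMeasurable d (volume.restrict (Ioo 0 1)) :=
    ((hQae.const_mul _).ennreal_ofReal : _)
  have hQ0 : ν {u | Q u = 0} = 0 := by
    set d' := hdae.mk d with hd'
    have hνd' : ν = (volume.restrict (Ioo 0 1)).withDensity d' := by
      rw [hν]; exact withDensity_congr_ae hdae.ae_eq_mk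
    have hsub : {u | Q u = 0} ⊆ {u | d' u = 0} ∪ {u | d u ≠ d' u} := by
      intro u hu
      by_cases hdd : d u = d' u
      · left
        rw [mem_setOf_eq, ← hdd, hd]
        rw [mem_setOf_eq] at hu
        simp [hu]
      · right; exact hdd
    refine measure_mono_null hsub (measure_union_null ?_ ?_)
    · have hms : MeasurableSet {u : ℝ | d' u = 0} := hdae.measurable_mk (measurableSet_singleton 0)
      rw [hνd', withDensity_apply _ hms]
      rw [setLIntegral_congr_fun hms (fun u hu => hu)]
      simp
    · refine hνac ?_
      have := hdae.ae_eq_mk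
      rw [Filter.EventuallyEq, ae_iff] at this
      exact this
  have hhae : (fun u => (h u * Q u) * (Q u)⁻¹) =ᵐ[ν] h := by
    have hane : ∀ᵐ u ∂ν, Q u ≠ 0 := by
      rw [ae_iff]
      simpa using hQ0
    filter_upwards [hane] with u hu
    field_simp
  have haesm : AEStronglyMeasurable h ν := hgν.congr hhae
  -- first identity
  have hres1 : ∫ ω, h (XL ω) ∂ℙ
      = (∫ ω, X ω ∂ℙ)⁻¹ * ∫ u in Ioo (0:ℝ) 1, h u * Q u := by
    have hmap1 : ∫ ω, h (XL ω) ∂ℙ = ∫ y, h y ∂ν := by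
      rw [← hmapXL]
      exact (integral_map hXLmeas.aemeasurable (by rw [hmapXL]; exact haesm)).symm
    rw [hmap1, hν]
    set f : ℝ → ℝ≥0 := fun u => Real.toNNReal ((∫ ω, X ω ∂ℙ)⁻¹ * Q u) with hf
    have hfa : AEMeasurable f (volume.restrict (Ioo 0 1)) :=
      (hQae.const_mul _).real_toNNReal
    have hdf : (volume.restrict (Ioo 0 1)).withDensity d
        = (volume.restrict (Ioo 0 1)).withDensity (fun u => (f u : ℝ≥0∞)) := rfl
    rw [hdf, integral_withDensity_eq_integral_smul₀ hfa h]
    have hcongr : ∀ᵐ u ∂(volume.restrict (Ioo (0:ℝ) 1)),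
        f u • h u = (∫ ω, X ω ∂ℙ)⁻¹ * (h u * Q u) := by
      filter_upwards [ae_restrict_mem measurableSet_Ioo] with u hu
      rw [hf]
      simp only [NNReal.smul_def, NNReal.coe_mk, Real.coe_toNNReal _
        (mul_nonneg (inv_nonneg.2 hE.le) (hQnonneg u hu)), smul_eq_mul]
      ring
    rw [integral_congr_ae hcongr, MeasureTheory.integral_const_mul]
  -- second identity
  have huni : ℙ.map (fun ω => cdf μ (X ω)) = volume.restrict (Ioo 0 1) :=
    aux_uniform ℙ X hX.meas hc hX.absCont
  obtain ⟨N, hNm, hN0, hNprop⟩ := aux_qf_cdf_ae μ hc hX.absCont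
  have haeQ : ∀ᵐ ω ∂ℙ, Q (cdf μ (X ω)) = X ω := by
    have hXN : ℙ (X ⁻¹' N) = 0 := by
      rw [← Measure.map_apply hX.meas hNm]; exact hN0
    rw [ae_iff]
    refine measure_mono_null (fun ω hω => ?_) hXN
    rw [mem_setOf_eq] at hω
    by_contra hmem
    exact hω (by rw [hqf]; exact hNprop _ hmem)
  have hres2 : ∫ ω, h (distFun ℙ X (X ω)) * X ω ∂ℙ
      = ∫ u in Ioo (0:ℝ) 1, h u * Q u := by
    have e1 : ∫ ω, h (distFun ℙ X (X ω)) * X ω ∂ℙ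
        = ∫ ω, (fun u => h u * Q u) (cdf μ (X ω)) ∂ℙ := by
      refine integral_congr_ae ?_
      filter_upwards [haeQ] with ω hω
      simp only [hdist]
      rw [hω]
    have hφ : AEMeasurable (fun ω => cdf μ (X ω)) ℙ :=
      ((monotone_cdf μ).measurable.comp hX.meas).aemeasurable
    have hf2 : AEStronglyMeasurable (fun u => h u * Q u) (ℙ.map (fun ω => cdf μ (X ω))) := by
      rw [huni]; exact hhQm
    have e2 := integral_map hφ hf2
    rw [e1, ← e2, huni]
  exact ⟨hres1, by rw [hres2]; exact hres1⟩
end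
end

section
/- Let X and Y be random variables taking values in ℝ, with quantile functions Q_X and Q_Y, such that −∞ < E[X] < E[Y] < +∞. Then the function f(u) = (Q_Y(u) − Q_X(u))/(E[Y] − E[X]), 0 < u < 1, is a probability density function (of an absolutely continuous random variable taking values in (0,1)) if, and only if, X ≤_st Y, i.e. Q_X(u) ≤ Q_Y(u) for all u ∈ (0,1). -/
open MeasureTheory Set Filter

noncomputable section

variable {Ω : Type*} [MeasurableSpace Ω]

section AuxStmt5
open ProbabilityTheory (cdf cdf_eq_real tendsto_cdf_atTop tendsto_cdf_atBot monotone_cdf ofReal_cdf cdf_nonneg cdf_le_one)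

variable (ℙ : Measure Ω) [IsProbabilityMeasure ℙ] (X : Ω → ℝ)

lemma distFun_eq_cdf (hX : Measurable X) (x : ℝ) :
    distFun ℙ X x = cdf (ℙ.map X) x := by
  have : IsProbabilityMeasure (ℙ.map X) := Measure.isProbabilityMeasure_map hX.aemeasurable
  rw [cdf_eq_real, measureReal_def, Measure.map_apply hX measurableSet_Iic]
  rfl

lemma quantile_le_iff (hX : Measurable X) {u : ℝ} (hu : u ∈ Ioo (0:ℝ) 1) (t : ℝ) :
    quantileFun ℙ X u ≤ t ↔ u ≤ cdf (ℙ.map X) t := by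
  have : IsProbabilityMeasure (ℙ.map X) := Measure.isProbabilityMeasure_map hX.aemeasurable
  set F := cdf (ℙ.map X) with hF
  have hQ : quantileFun ℙ X u = sInf {x : ℝ | u ≤ F x} := by
    unfold quantileFun
    congr 1
    ext x
    simp only [mem_setOf_eq, distFun_eq_cdf ℙ X hX, hF]
  set S := {x : ℝ | u ≤ F x} with hS
  have hne : S.Nonempty := by
    obtain ⟨x, hx⟩ := ((tendsto_cdf_atTop (ℙ.map X)).eventually
      (eventually_gt_nhds hu.2)).exists
    exact ⟨x, hx.le⟩
  have hbdd : BddBelow S := by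
    obtain ⟨x0, hx0⟩ := ((tendsto_cdf_atBot (ℙ.map X)).eventually
      (eventually_lt_nhds hu.1)).exists
    refine ⟨x0, fun x hx => ?_⟩
    by_contra h
    push_neg at h
    exact absurd (hx.trans ((monotone_cdf (ℙ.map X)) h.le)) (not_le.2 hx0)
  have hmem : sInf S ∈ S := by
    have hrc : Tendsto F (nhdsWithin (sInf S) (Ioi (sInf S))) (nhds (F (sInf S))) :=
      ((cdf (ℙ.map X)).right_continuous (sInf S)).tendsto.mono_left
        (nhdsWithin_mono _ Ioi_subset_Ici_self)
    refine ge_of_tendsto hrc ?_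
    filter_upwards [self_mem_nhdsWithin] with x' hx'
    obtain ⟨s, hs, hs'⟩ := (csInf_lt_iff hbdd hne).mp hx'
    exact hs.trans (monotone_cdf (ℙ.map X) hs'.le)
  rw [hQ]
  constructor
  · intro h
    exact hmem.trans (monotone_cdf (ℙ.map X) h)
  · intro h
    exact csInf_le hbdd h

lemma quantile_monotoneOn (hX : Measurable X) :
    MonotoneOn (quantileFun ℙ X) (Ioo (0:ℝ) 1) := by
  intro u hu v hv huv
  have h := (quantile_le_iff ℙ X hX hv (quantileFun ℙ X v)).mp le_rfl
  exact (quantile_le_iff ℙ X hX hu (quantileFun ℙ X v)).mpr (huv.trans h)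

lemma quantile_aemeasurable (hX : Measurable X) :
    AEMeasurable (quantileFun ℙ X) (volume.restrict (Ioo (0:ℝ) 1)) :=
  aemeasurable_restrict_of_monotoneOn measurableSet_Ioo (quantile_monotoneOn ℙ X hX)

instance : IsProbabilityMeasure (volume.restrict (Ioo (0:ℝ) 1)) := by
  constructor
  rw [Measure.restrict_apply_univ, Real.volume_Ioo]
  norm_num

lemma map_quantile (hX : Measurable X) :
    Measure.map (quantileFun ℙ X) (volume.restrict (Ioo (0:ℝ) 1)) = ℙ.map X := by
  have hPM : IsProbabilityMeasure (ℙ.map X) := Measure.isProbabilityMeasure_map hX.aemeasurable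
  have hQM : IsProbabilityMeasure
      (Measure.map (quantileFun ℙ X) (volume.restrict (Ioo (0:ℝ) 1))) :=
    Measure.isProbabilityMeasure_map (quantile_aemeasurable ℙ X hX)
  refine Measure.ext_of_Iic _ _ (fun t => ?_)
  rw [Measure.map_apply_of_aemeasurable (quantile_aemeasurable ℙ X hX) measurableSet_Iic,
    Measure.restrict_apply' measurableSet_Ioo, ← ofReal_cdf (ℙ.map X) t]
  set c := cdf (ℙ.map X) t with hc
  have hset : quantileFun ℙ X ⁻¹' Iic t ∩ Ioo 0 1 = Iic c ∩ Ioo 0 1 := by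
    ext u
    simp only [mem_inter_iff, mem_preimage, mem_Iic, and_congr_left_iff]
    intro hu
    exact quantile_le_iff ℙ X hX hu t
  rw [hset]
  have hc0 : 0 ≤ c := cdf_nonneg _ _
  have hc1 : c ≤ 1 := cdf_le_one _ _
  rcases eq_or_lt_of_le hc1 with h1 | h1
  · have : Iic c ∩ Ioo (0:ℝ) 1 = Ioo 0 1 := by
      rw [inter_eq_right]
      intro x hx
      exact (le_of_lt hx.2).trans h1.ge
    rw [this, Real.volume_Ioo, h1]
    norm_num
  · have : Iic c ∩ Ioo (0:ℝ) 1 = Ioc 0 c := by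
      ext x
      simp only [mem_inter_iff, mem_Iic, mem_Ioo, mem_Ioc]
      constructor
      · rintro ⟨h, h2, _⟩; exact ⟨h2, h⟩
      · rintro ⟨h2, h⟩; exact ⟨h, h2, lt_of_le_of_lt h h1⟩
    rw [this, Real.volume_Ioc, sub_zero]

lemma integrable_quantile (hX : Measurable X) (hXi : Integrable X ℙ) :
    IntegrableOn (quantileFun ℙ X) (Ioo (0:ℝ) 1) volume := by
  have h1 : Integrable (id : ℝ → ℝ)
      (Measure.map (quantileFun ℙ X) (volume.restrict (Ioo (0:ℝ) 1))) := by
    rw [map_quantile ℙ X hX]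
    rw [integrable_map_measure aestronglyMeasurable_id hX.aemeasurable]
    exact hXi
  rw [integrable_map_measure aestronglyMeasurable_id (quantile_aemeasurable ℙ X hX)] at h1
  exact h1

lemma integral_quantile (hX : Measurable X) :
    ∫ u in Ioo (0:ℝ) 1, quantileFun ℙ X u = ∫ ω, X ω ∂ℙ := by
  have h1 : ∫ x, id x ∂(Measure.map (quantileFun ℙ X) (volume.restrict (Ioo (0:ℝ) 1)))
      = ∫ u in Ioo (0:ℝ) 1, quantileFun ℙ X u :=
    integral_map (quantile_aemeasurable ℙ X hX) aestronglyMeasurable_id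
  have h2 : ∫ x, id x ∂(ℙ.map X) = ∫ ω, X ω ∂ℙ :=
    integral_map hX.aemeasurable aestronglyMeasurable_id
  rw [← h1, map_quantile ℙ X hX, h2]

end AuxStmt5

/-- Proposition 4.1.  `f(u) = (Q_Y(u) - Q_X(u))/(E[Y] - E[X])` is a
probability density function on `(0,1)` iff `X ≤_st Y`. -/
theorem stmt5 (ℙ : Measure Ω) [IsProbabilityMeasure ℙ] (X Y : Ω → ℝ)
    (hXmeas : Measurable X) (hYmeas : Measurable Y)
    (hXint : Integrable X ℙ) (hYint : Integrable Y ℙ)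
    (hE : ∫ ω, X ω ∂ℙ < ∫ ω, Y ω ∂ℙ) :
    ((∀ u ∈ Ioo (0:ℝ) 1,
        0 ≤ (quantileFun ℙ Y u - quantileFun ℙ X u) / (∫ ω, Y ω ∂ℙ - ∫ ω, X ω ∂ℙ)) ∧
      IntegrableOn
        (fun u => (quantileFun ℙ Y u - quantileFun ℙ X u) / (∫ ω, Y ω ∂ℙ - ∫ ω, X ω ∂ℙ))
        (Ioo 0 1) volume ∧
      ∫ u in Ioo (0:ℝ) 1,
        (quantileFun ℙ Y u - quantileFun ℙ X u) / (∫ ω, Y ω ∂ℙ - ∫ ω, X ω ∂ℙ) = 1)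
    ↔ ∀ u ∈ Ioo (0:ℝ) 1, quantileFun ℙ X u ≤ quantileFun ℙ Y u := by
  set c := ∫ ω, Y ω ∂ℙ - ∫ ω, X ω ∂ℙ with hc
  have hcpos : 0 < c := sub_pos.2 hE
  constructor
  · rintro ⟨hnn, -, -⟩ u hu
    have h := hnn u hu
    have h2 : 0 ≤ (quantileFun ℙ Y u - quantileFun ℙ X u) / c * c :=
      mul_nonneg h hcpos.le
    rw [div_mul_cancel₀ _ hcpos.ne'] at h2
    linarith
  · intro h
    have hIX := integrable_quantile ℙ X hXmeas hXint
    have hIY := integrable_quantile ℙ Y hYmeas hYint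
    refine ⟨fun u hu => div_nonneg (sub_nonneg.2 (h u hu)) hcpos.le, ?_, ?_⟩
    · exact (hIY.sub hIX).div_const c
    · rw [integral_div, integral_sub hIY hIX, integral_quantile ℙ X hXmeas,
        integral_quantile ℙ Y hYmeas, ← hc, div_self hcpos.ne']
end
end

section
/- Let X and Y be random variables in the class 𝒟 with quantile functions Q_X, Q_Y, 0 < E[X] < E[Y] < +∞ and X ≤_st Y, and let X^L, Y^L, Z^L be the random variables on (0,1) with densities Q_X(u)/E[X], Q_Y(u)/E[Y], and (Q_Y(u) − Q_X(u))/(E[Y] − E[X]) respectively. Then the following three conditions are equivalent: (a) X^L ≤_st Y^L; (b) X^L ≤_st Z^L; (c) Y^L ≤_st Z^L. -/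
open MeasureTheory Set Filter

noncomputable section

variable {Ω : Type*} [MeasurableSpace Ω]

lemma distFun_of_neg {ℙ : Measure Ω} {X : Ω → ℝ} (hX : MemD ℙ X) {x : ℝ} (hx : x < 0) :
    distFun ℙ X x = 0 := by
  have h0 : ℙ {ω | X ω < 0} = 0 := by
    have := hX.nonneg
    rw [ae_iff] at this
    simpa [not_le] using this
  have : ℙ {ω | X ω ≤ x} = 0 :=
    measure_mono_null (fun ω hω => lt_of_le_of_lt hω hx) h0
  simp [distFun, this]

lemma quantile_set_subset {ℙ : Measure Ω} {X : Ω → ℝ} (hX : MemD ℙ X) {u : ℝ}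
    (hu : 0 < u) : {x : ℝ | u ≤ distFun ℙ X x} ⊆ Ici 0 := by
  intro x hx
  by_contra hneg
  rw [mem_Ici, not_le] at hneg
  have := distFun_of_neg hX hneg
  simp only [mem_setOf_eq, this] at hx
  linarith

lemma quantile_set_nonempty (ℙ : Measure Ω) [IsProbabilityMeasure ℙ] {X : Ω → ℝ}
    (hX : MemD ℙ X) {u : ℝ} (hu : u < 1) :
    {x : ℝ | u ≤ distFun ℙ X x}.Nonempty := by
  have hmono : Monotone (fun n : ℕ => {ω | X ω ≤ (n : ℝ)}) := by
    intro m n hmn ω hω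
    simp only [mem_setOf_eq] at hω ⊢
    exact le_trans hω (by exact_mod_cast hmn)
  have hU : (⋃ n : ℕ, {ω | X ω ≤ (n : ℝ)}) = univ := by
    ext ω
    simp only [mem_iUnion, mem_univ, iff_true, mem_setOf_eq]
    obtain ⟨n, hn⟩ := exists_nat_ge (X ω)
    exact ⟨n, hn⟩
  have h1 : Tendsto (fun n : ℕ => ℙ {ω | X ω ≤ (n : ℝ)}) atTop (nhds (ℙ univ)) := by
    have := tendsto_measure_iUnion_atTop (μ := ℙ) hmono
    rwa [hU] at this
  rw [measure_univ] at h1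
  have h2 : Tendsto (fun n : ℕ => distFun ℙ X (n : ℝ)) atTop (nhds 1) := by
    have := (ENNReal.tendsto_toReal (by norm_num : (1 : ENNReal) ≠ ⊤)).comp h1
    simpa [distFun, Function.comp_def] using this
  have := h2.eventually (eventually_ge_nhds hu)
  obtain ⟨n, hn⟩ := this.exists
  exact ⟨(n : ℝ), hn⟩

lemma quantile_nonneg {ℙ : Measure Ω} {X : Ω → ℝ} (hX : MemD ℙ X) {u : ℝ} (hu : 0 < u) :
    0 ≤ quantileFun ℙ X u :=
  Real.sInf_nonneg (fun x hx => quantile_set_subset hX hu hx)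

lemma quantile_monoOn (ℙ : Measure Ω) [IsProbabilityMeasure ℙ] {X : Ω → ℝ}
    (hX : MemD ℙ X) {t : ℝ} (ht : t < 1) :
    MonotoneOn (quantileFun ℙ X) (Icc 0 t) := by
  intro u hu v hv huv
  rcases eq_or_lt_of_le hu.1 with h0 | h0
  · -- u = 0
    have : quantileFun ℙ X u = 0 := by
      have hset : {x : ℝ | u ≤ distFun ℙ X x} = univ := by
        ext x
        simp only [mem_setOf_eq, mem_univ, iff_true]
        exact le_trans (le_of_eq h0.symm) ENNReal.toReal_nonneg
      rw [quantileFun, hset]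
      have : ¬ BddBelow (univ : Set ℝ) := by
        simp [bddBelow_def]
        intro x
        exact ⟨x - 1, by linarith⟩
      exact Real.sInf_of_not_bddBelow this
    rcases eq_or_lt_of_le hv.1 with h0' | h0'
    · rw [← h0, ← h0']
    · rw [this]
      exact quantile_nonneg hX h0'
  · -- 0 < u
    have h0v : 0 < v := lt_of_lt_of_le h0 huv
    apply csInf_le_csInf
    · exact ⟨0, fun x hx => quantile_set_subset hX h0 hx⟩
    · exact quantile_set_nonempty ℙ hX (lt_of_le_of_lt hv.2 ht)
    · intro x hx
      exact le_trans huv hx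

lemma quantile_intervalIntegrable (ℙ : Measure Ω) [IsProbabilityMeasure ℙ] {X : Ω → ℝ}
    (hX : MemD ℙ X) {t : ℝ} (ht0 : 0 < t) (ht : t < 1) :
    IntervalIntegrable (quantileFun ℙ X) volume 0 t := by
  apply MonotoneOn.intervalIntegrable
  rw [uIcc_of_le ht0.le]
  exact quantile_monoOn ℙ hX ht

lemma alg_key (a b sX sY : ℝ) (ha : 0 < a) (hab : a < b) :
    (sY / b ≤ sX / a ↔ (sY - sX) / (b - a) ≤ sX / a) ∧
    ((sY - sX) / (b - a) ≤ sX / a ↔ (sY - sX) / (b - a) ≤ sY / b) := by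
  have hb : 0 < b := ha.trans hab
  have hba : 0 < b - a := sub_pos.2 hab
  rw [div_le_div_iff₀ hb ha, div_le_div_iff₀ hba ha, div_le_div_iff₀ hba hb]
  constructor <;> constructor <;> intro h <;> nlinarith

/-- the conditions `X^L ≤_st Y^L`, `X^L ≤_st Z^L` and `Y^L ≤_st Z^L`
are equivalent; the usual stochastic order is expressed through the distribution
functions obtained from the densities of `X^L`, `Y^L`, `Z^L`. -/
theorem stmt10 (ℙ : Measure Ω) [IsProbabilityMeasure ℙ] (X Y : Ω → ℝ)
    (hX : MemD ℙ X) (hY : MemD ℙ Y)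
    (hEX : 0 < ∫ ω, X ω ∂ℙ) (hE : ∫ ω, X ω ∂ℙ < ∫ ω, Y ω ∂ℙ)
    (hst : ∀ u ∈ Ioo (0:ℝ) 1, quantileFun ℙ X u ≤ quantileFun ℙ Y u) :
    ((∀ t ∈ Ioo (0:ℝ) 1,
        ∫ u in (0:ℝ)..t, quantileFun ℙ Y u / ∫ ω, Y ω ∂ℙ
          ≤ ∫ u in (0:ℝ)..t, quantileFun ℙ X u / ∫ ω, X ω ∂ℙ) ↔
      (∀ t ∈ Ioo (0:ℝ) 1,
        ∫ u in (0:ℝ)..t,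
            (quantileFun ℙ Y u - quantileFun ℙ X u) / (∫ ω, Y ω ∂ℙ - ∫ ω, X ω ∂ℙ)
          ≤ ∫ u in (0:ℝ)..t, quantileFun ℙ X u / ∫ ω, X ω ∂ℙ)) ∧
    ((∀ t ∈ Ioo (0:ℝ) 1,
        ∫ u in (0:ℝ)..t,
            (quantileFun ℙ Y u - quantileFun ℙ X u) / (∫ ω, Y ω ∂ℙ - ∫ ω, X ω ∂ℙ)
          ≤ ∫ u in (0:ℝ)..t, quantileFun ℙ X u / ∫ ω, X ω ∂ℙ) ↔
      (∀ t ∈ Ioo (0:ℝ) 1,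
        ∫ u in (0:ℝ)..t,
            (quantileFun ℙ Y u - quantileFun ℙ X u) / (∫ ω, Y ω ∂ℙ - ∫ ω, X ω ∂ℙ)
          ≤ ∫ u in (0:ℝ)..t, quantileFun ℙ Y u / ∫ ω, Y ω ∂ℙ)) := by
  set a := ∫ ω, X ω ∂ℙ with ha_def
  set b := ∫ ω, Y ω ∂ℙ with hb_def
  have key : ∀ t ∈ Ioo (0:ℝ) 1,
      ((∫ u in (0:ℝ)..t, quantileFun ℙ Y u / b)
          = (∫ u in (0:ℝ)..t, quantileFun ℙ Y u) / b) ∧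
      ((∫ u in (0:ℝ)..t, quantileFun ℙ X u / a)
          = (∫ u in (0:ℝ)..t, quantileFun ℙ X u) / a) ∧
      ((∫ u in (0:ℝ)..t, (quantileFun ℙ Y u - quantileFun ℙ X u) / (b - a))
          = ((∫ u in (0:ℝ)..t, quantileFun ℙ Y u)
              - (∫ u in (0:ℝ)..t, quantileFun ℙ X u)) / (b - a)) := by
    intro t ht
    have hIX := quantile_intervalIntegrable ℙ hX ht.1 ht.2
    have hIY := quantile_intervalIntegrable ℙ hY ht.1 ht.2
    refine ⟨intervalIntegral.integral_div .., intervalIntegral.integral_div .., ?_⟩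
    rw [← intervalIntegral.integral_sub hIY hIX, ← intervalIntegral.integral_div]
  constructor
  · constructor
    · intro h t ht
      have h1 := h t ht
      rw [(key t ht).1, (key t ht).2.1] at h1
      rw [(key t ht).2.1, (key t ht).2.2]
      exact ((alg_key a b _ _ hEX hE).1).mp h1
    · intro h t ht
      have h1 := h t ht
      rw [(key t ht).2.1, (key t ht).2.2] at h1
      rw [(key t ht).1, (key t ht).2.1]
      exact ((alg_key a b _ _ hEX hE).1).mpr h1
  · constructor
    · intro h t ht
      have h1 := h t ht
      rw [(key t ht).2.1, (key t ht).2.2] at h1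
      rw [(key t ht).1, (key t ht).2.2]
      exact ((alg_key a b _ _ hEX hE).2).mp h1
    · intro h t ht
      have h1 := h t ht
      rw [(key t ht).1, (key t ht).2.2] at h1
      rw [(key t ht).2.1, (key t ht).2.2]
      exact ((alg_key a b _ _ hEX hE).2).mpr h1
end
end
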